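/- Let (Ω, F, P) be a probability space and (x_n) a sequence of measurable functions Ω → ℝ^d such that sup_n |x_n(ω)| < ∞ for almost all ω. Then there exists a sequence (n_k) of ℕ-valued measurable functions with n_k(ω) < n_{k+1}(ω) for all ω and k, such that the sequence y_k(ω) := x_{n_k(ω)}(ω) converges almost surely to some measurable function x : Ω → ℝ^d. -/

import Mathlib

open MeasureTheory Filter Topology

open scoped Classical

/-- The next index after `g ω` where `Q` holds (or `g ω + 1` if no such index exists). -/
noncomputable def rbwNext {Ω : Type*} (g : Ω → ℕ) (Q : ℕ → Ω → Prop) (ω : Ω) : ℕ :=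
  if h : ∃ n, g ω < n ∧ Q n ω then Nat.find h else g ω + 1

lemma rbwNext_gt {Ω : Type*} (g : Ω → ℕ) (Q : ℕ → Ω → Prop) (ω : Ω) :
    g ω < rbwNext g Q ω := by
  unfold rbwNext
  split_ifs with h
  · exact (Nat.find_spec h).1
  · exact Nat.lt_succ_self _

lemma rbwNext_prop {Ω : Type*} {g : Ω → ℕ} {Q : ℕ → Ω → Prop} {ω : Ω}
    (h : ∃ n, g ω < n ∧ Q n ω) : Q (rbwNext g Q ω) ω := by
  unfold rbwNext
  rw [dif_pos h]
  exact (Nat.find_spec h).2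

lemma rbwNext_measurable {Ω : Type*} [MeasurableSpace Ω] {g : Ω → ℕ} {Q : ℕ → Ω → Prop}
    (hg : Measurable g) (hQ : ∀ n, MeasurableSet {ω | Q n ω}) :
    Measurable (rbwNext g Q) := by
  apply measurable_to_countable'
  intro j
  have hset : ∀ i : ℕ, MeasurableSet {ω : Ω | g ω < i ∧ Q i ω} := by
    intro i
    exact (hg (MeasurableSet.of_discrete (s := {t : ℕ | t < i}))).inter (hQ i)
  have : (rbwNext g Q) ⁻¹' {j} =
      ({ω | g ω < j ∧ Q j ω} ∩ (⋂ i, ⋂ _ : i < j, {ω | g ω < i ∧ Q i ω}ᶜ))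
      ∪ ((g ⁻¹' {t | t + 1 = j}) ∩ (⋂ i, {ω | g ω < i ∧ Q i ω}ᶜ)) := by
    ext ω
    simp only [Set.mem_preimage, Set.mem_singleton_iff, Set.mem_union, Set.mem_inter_iff,
      Set.mem_iInter, Set.mem_compl_iff, Set.mem_setOf_eq]
    unfold rbwNext
    split_ifs with h
    · rw [Nat.find_eq_iff h]
      constructor
      · rintro ⟨h1, h3⟩
        exact Or.inl ⟨h1, fun i hi => h3 i hi⟩
      · rintro (⟨h1, h3⟩ | ⟨h1, h2⟩)
        · exact ⟨h1, fun i hi => h3 i hi⟩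
        · obtain ⟨n, hn⟩ := h
          exact absurd hn (h2 n)
    · push_neg at h
      constructor
      · intro hj
        exact Or.inr ⟨hj, fun i hi => (h i hi.1) hi.2⟩
      · rintro (⟨⟨h1, h2⟩, _⟩ | ⟨h1, _⟩)
        · exact absurd h2 (h j h1)
        · exact h1
  rw [this]
  apply MeasurableSet.union
  · exact (hset j).inter (MeasurableSet.iInter fun i =>
      MeasurableSet.iInter fun _ => (hset i).compl)
  · exact (hg MeasurableSet.of_discrete).inter (MeasurableSet.iInter fun i => (hset i).compl)

/-- Composition of a randomly-indexed family with a measurable index is measurable. -/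
lemma measurable_index_comp {Ω β : Type*} [MeasurableSpace Ω] [MeasurableSpace β]
    {a : ℕ → Ω → β} {b : Ω → ℕ} (ha : ∀ n, Measurable (a n)) (hb : Measurable b) :
    Measurable fun ω => a (b ω) ω := by
  intro S hS
  have : (fun ω => a (b ω) ω) ⁻¹' S = ⋃ i, (b ⁻¹' {i}) ∩ ((a i) ⁻¹' S) := by
    ext ω
    simp only [Set.mem_preimage, Set.mem_iUnion, Set.mem_inter_iff, Set.mem_singleton_iff]
    exact ⟨fun h => ⟨b ω, rfl, h⟩, by rintro ⟨i, rfl, h⟩; exact h⟩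
  rw [this]
  exact MeasurableSet.iUnion fun i =>
    (hb (MeasurableSet.singleton i)).inter (ha i hS)

/-- Scalar randomized Bolzano–Weierstrass: a random subsequence of an a.s. bounded
sequence of real random variables that converges a.s. -/
lemma rbw_scalar {Ω : Type*} [MeasurableSpace Ω] (P : Measure Ω)
    (z : ℕ → Ω → ℝ) (hz : ∀ n, Measurable (z n))
    (hb : ∀ᵐ ω ∂P, ∃ C : ℝ, ∀ n, |z n ω| ≤ C) :
    ∃ mk : ℕ → Ω → ℕ, (∀ k, Measurable (mk k)) ∧ (∀ k ω, mk k ω < mk (k + 1) ω) ∧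
      ∀ᵐ ω ∂P, ∃ l : ℝ, Tendsto (fun k => z (mk k ω) ω) atTop (𝓝 l) := by
  set L : Ω → ℝ := fun ω => limsup (fun n => z n ω) atTop with hL
  have hLmeas : Measurable L := Measurable.limsup hz
  -- define the random indices recursively
  let mk : ℕ → Ω → ℕ := fun k => Nat.rec (fun _ => 0)
    (fun k prev => rbwNext prev (fun n ω => L ω - 1 / (k + 1) < z n ω)) k
  have hmk0 : mk 0 = fun _ => 0 := rfl
  have hmkS : ∀ k, mk (k + 1) = rbwNext (mk k) (fun n ω => L ω - 1 / (k + 1) < z n ω) :=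
    fun k => rfl
  have hmono : ∀ k ω, mk k ω < mk (k + 1) ω := by
    intro k ω
    rw [hmkS k]
    exact rbwNext_gt _ _ ω
  have hstrict : ∀ ω, StrictMono fun k => mk k ω := fun ω =>
    strictMono_nat_of_lt_succ fun k => hmono k ω
  have hge : ∀ k ω, k ≤ mk k ω := by
    intro k ω
    simpa using (hstrict ω).le_apply (x := k)
  have hmkmeas : ∀ k, Measurable (mk k) := by
    intro k
    induction k with
    | zero => exact measurable_const
    | succ k ih =>
      rw [hmkS k]
      apply rbwNext_measurable ih
      intro n
      exact measurableSet_lt (hLmeas.sub measurable_const) (hz n)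
  refine ⟨mk, hmkmeas, hmono, ?_⟩
  filter_upwards [hb] with ω hC
  obtain ⟨C, hC⟩ := hC
  have hbound : IsBoundedUnder (· ≤ ·) atTop fun n => z n ω :=
    isBoundedUnder_of ⟨C, fun n => (abs_le.1 (hC n)).2⟩
  have hbound' : IsBoundedUnder (· ≥ ·) atTop fun n => z n ω :=
    isBoundedUnder_of ⟨-C, fun n => (abs_le.1 (hC n)).1⟩
  have hcob : IsCoboundedUnder (· ≤ ·) atTop fun n => z n ω :=
    hbound'.isCoboundedUnder_le
  -- each step finds a value above L ω - 1/(k+1)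
  have hlow : ∀ k : ℕ, L ω - 1 / (k + 1) < z (mk (k + 1) ω) ω := by
    intro k
    have hex : ∃ n, mk k ω < n ∧ L ω - 1 / (k + 1 : ℝ) < z n ω := by
      have hfreq : ∃ᶠ n in atTop, L ω - 1 / (k + 1 : ℝ) < z n ω := by
        apply frequently_lt_of_lt_limsup hcob
        have : (0 : ℝ) < 1 / (k + 1) := by positivity
        linarith [this]
      obtain ⟨n, hn, hn'⟩ := (frequently_atTop.1 hfreq) (mk k ω + 1)
      exact ⟨n, lt_of_lt_of_le (Nat.lt_succ_self _) hn, hn'⟩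
    rw [hmkS k]
    exact rbwNext_prop (g := mk k) (Q := fun n ω => L ω - 1 / (k + 1) < z n ω) hex
  refine ⟨L ω, ?_⟩
  rw [Metric.tendsto_atTop]
  intro ε hε
  -- upper bound eventually
  have hup : ∀ᶠ n in atTop, z n ω < L ω + ε := by
    apply eventually_lt_of_limsup_lt _ hbound
    show L ω < L ω + ε
    linarith
  obtain ⟨N1, hN1⟩ := eventually_atTop.1 hup
  obtain ⟨n0, hn0⟩ := exists_nat_one_div_lt hε
  refine ⟨max N1 (n0 + 1), fun k hk => ?_⟩
  have hk1 : N1 ≤ k := le_trans (le_max_left _ _) hk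
  have hk2 : n0 + 1 ≤ k := le_trans (le_max_right _ _) hk
  obtain ⟨j, rfl⟩ : ∃ j, k = j + 1 := ⟨k - 1, by omega⟩
  have hupper : z (mk (j + 1) ω) ω < L ω + ε :=
    hN1 _ (le_trans hk1 (hge _ ω))
  have hlower : L ω - ε < z (mk (j + 1) ω) ω := by
    have h1 : (1 : ℝ) / (j + 1) ≤ 1 / (n0 + 1) := by
      apply one_div_le_one_div_of_le
      · positivity
      · have : (n0 + 1 : ℕ) ≤ j + 1 := hk2
        exact_mod_cast this
    have := hlow j
    have : L ω - ε < L ω - 1 / (j + 1 : ℝ) + (z (mk (j + 1) ω) ω - (L ω - 1 / (j + 1 : ℝ))) := by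
      have := hlow j
      nlinarith [hn0]
    linarith [hlow j]
  rw [Real.dist_eq, abs_sub_lt_iff]
  constructor <;> linarith

lemma rbw_coord_abs_le {d : ℕ} (v : EuclideanSpace ℝ (Fin d)) (i : Fin d) :
    |v i| ≤ ‖v‖ := by
  rw [EuclideanSpace.norm_eq]
  rw [← Real.sqrt_sq_eq_abs]
  apply Real.sqrt_le_sqrt
  have : |v i| ^ 2 ≤ ∑ j, ‖v j‖ ^ 2 := by
    have h := Finset.single_le_sum (f := fun j => ‖v j‖ ^ 2)
      (fun j _ => by positivity) (Finset.mem_univ i)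
    simpa [Real.norm_eq_abs, sq_abs] using h
  simpa [sq_abs] using this

/-- Randomized Bolzano–Weierstrass theorem (Kabanov–Stricker). -/
theorem randomized_bolzano_weierstrass
    {Ω : Type*} [MeasurableSpace Ω] (P : Measure Ω) [IsProbabilityMeasure P]
    (d : ℕ) (x : ℕ → Ω → EuclideanSpace ℝ (Fin d))
    (hmeas : ∀ n, Measurable (x n))
    (hbdd : ∀ᵐ ω ∂P, ∃ C : ℝ, ∀ n, ‖x n ω‖ ≤ C) :
    ∃ nk : ℕ → Ω → ℕ,
      (∀ k, Measurable (nk k)) ∧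
      (∀ k, ∀ ω, nk k ω < nk (k + 1) ω) ∧
      ∃ xlim : Ω → EuclideanSpace ℝ (Fin d), Measurable xlim ∧
        ∀ᵐ ω ∂P, Tendsto (fun k => x (nk k ω) ω) atTop (nhds (xlim ω)) := by
  have hcoordmeas : ∀ (n : ℕ) (i : Fin d), Measurable fun ω => x n ω i :=
    fun n i => (measurable_pi_apply i).comp ((PiLp.continuous_ofLp 2 _).measurable.comp (hmeas n))
  -- extract coordinates one at a time
  have key : ∀ m : ℕ, ∃ nk : ℕ → Ω → ℕ,
      (∀ k, Measurable (nk k)) ∧ (∀ k ω, nk k ω < nk (k + 1) ω) ∧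
      ∀ i : Fin d, (i : ℕ) < m →
        ∀ᵐ ω ∂P, ∃ l : ℝ, Tendsto (fun k => x (nk k ω) ω i) atTop (𝓝 l) := by
    intro m
    induction m with
    | zero =>
      exact ⟨fun k _ => k, fun k => measurable_const, fun k ω => Nat.lt_succ_self k,
        fun i hi => absurd hi (Nat.not_lt_zero _)⟩
    | succ m ih =>
      obtain ⟨nk, hnkmeas, hnkmono, hnkconv⟩ := ih
      by_cases hm : m < d
      · set i₀ : Fin d := ⟨m, hm⟩ with hi₀
        set z : ℕ → Ω → ℝ := fun k ω => x (nk k ω) ω i₀ with hz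
        have hzmeas : ∀ k, Measurable (z k) := by
          intro k
          exact measurable_index_comp (fun n => hcoordmeas n i₀) (hnkmeas k)
        have hzbdd : ∀ᵐ ω ∂P, ∃ C : ℝ, ∀ k, |z k ω| ≤ C := by
          filter_upwards [hbdd] with ω hC
          obtain ⟨C, hC⟩ := hC
          exact ⟨C, fun k => le_trans (rbw_coord_abs_le _ _) (hC _)⟩
        obtain ⟨mk, hmkmeas, hmkmono, hmkconv⟩ := rbw_scalar P z hzmeas hzbdd
        have hmkstrict : ∀ ω, StrictMono fun k => mk k ω := fun ω =>
          strictMono_nat_of_lt_succ fun k => hmkmono k ω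
        have hnkstrict : ∀ ω, StrictMono fun k => nk k ω := fun ω =>
          strictMono_nat_of_lt_succ fun k => hnkmono k ω
        refine ⟨fun k ω => nk (mk k ω) ω, ?_, ?_, ?_⟩
        · exact fun k => measurable_index_comp hnkmeas (hmkmeas k)
        · exact fun k ω => hnkstrict ω (hmkmono k ω)
        · intro i hi
          rcases Nat.lt_or_ge (i : ℕ) m with him | him
          · filter_upwards [hnkconv i him] with ω hω
            obtain ⟨l, hl⟩ := hω
            exact ⟨l, hl.comp ((hmkstrict ω).tendsto_atTop)⟩
          · have : i = i₀ := by
              apply Fin.ext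
              simp only [hi₀]
              omega
            subst this
            filter_upwards [hmkconv] with ω hω
            exact hω
      · refine ⟨nk, hnkmeas, hnkmono, fun i _ => hnkconv i ?_⟩
        have : (i : ℕ) < d := i.isLt
        omega
  obtain ⟨nk, hnkmeas, hnkmono, hnkconv⟩ := key d
  have hall : ∀ᵐ ω ∂P, ∀ i : Fin d,
      ∃ l : ℝ, Tendsto (fun k => x (nk k ω) ω i) atTop (𝓝 l) :=
    (ae_all_iff).2 fun i => hnkconv i i.isLt
  have hvec : ∀ᵐ ω ∂P, ∃ v : EuclideanSpace ℝ (Fin d),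
      Tendsto (fun k => x (nk k ω) ω) atTop (𝓝 v) := by
    filter_upwards [hall] with ω hω
    set w : EuclideanSpace ℝ (Fin d) := WithLp.toLp 2 (fun i => (hω i).choose) with hw
    refine ⟨w, ?_⟩
    let e : EuclideanSpace ℝ (Fin d) ≃L[ℝ] (Fin d → ℝ) := EuclideanSpace.equiv (Fin d) ℝ
    have h1 : Tendsto (fun k => e (x (nk k ω) ω)) atTop (𝓝 (e w)) := by
      rw [tendsto_pi_nhds]
      intro i
      exact (hω i).choose_spec
    have h2 := (e.symm.continuous.tendsto (e w)).comp h1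
    simpa only [Function.comp_def, ContinuousLinearEquiv.symm_apply_apply] using h2
  have hfmeas : ∀ k, Measurable fun ω => x (nk k ω) ω :=
    fun k => measurable_index_comp hmeas (hnkmeas k)
  obtain ⟨xlim, hxlimmeas, hxlim⟩ :=
    measurable_limit_of_tendsto_metrizable_ae (fun k => (hfmeas k).aemeasurable) hvec
  exact ⟨nk, hnkmeas, hnkmono, xlim, hxlimmeas, hxlim⟩
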